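/- The sets {f ∈ ℝ² : f₀ > 0} and {(ω₁,ω₂) ∈ ℝ² : ω₁ < ξ < ω₂} are in bijection via the maps Q and R: for every f with f₀ > 0, Q(f) satisfies Q(f)₁ < ξ < Q(f)₂ and R(Q(f)) = f; and for every ω with ω₁ < ξ < ω₂, R(ω)₀ > 0 and Q(R(ω)) = ω. -/

import Mathlib

open MeasureTheory Real Set

noncomputable section

/-- J_λ = ∫_{-1}^1 (1-z²)^λ dz -/
def Jl (l : ℝ) : ℝ := ∫ z in (-1:ℝ)..1, (1 - z^2) ^ l

/-- θ = (γ-1)/2 -/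
def th (γ : ℝ) : ℝ := (γ - 1) / 2

/-- λ = 1/(γ-1) - 1/2 -/
def lam (γ : ℝ) : ℝ := 1 / (γ - 1) - 1 / 2

/-- a_γ = 2√(γκ)/(γ-1) -/
def ag (γ κ : ℝ) : ℝ := 2 * Real.sqrt (γ * κ) / (γ - 1)

/-- c_{γ,κ} = a_γ^{-2/(γ-1)} / J_λ -/
def cgk (γ κ : ℝ) : ℝ := ag γ κ ^ (-(2 / (γ - 1))) / Jl (lam γ)

/-- χ(ρ,ξ) = c_{γ,κ} (a_γ² ρ^{γ-1} - ξ²)_+^λ -/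
def chi (γ κ ρ ξ : ℝ) : ℝ :=
  cgk γ κ * (max (ag γ κ ^ 2 * ρ ^ (γ - 1) - ξ ^ 2) 0) ^ lam γ

/-- vector-valued Maxwellian -/
def Mx (γ κ ρ u ξ : ℝ) : ℝ × ℝ :=
  (chi γ κ ρ (ξ - u), ((1 - th γ) * u + th γ * ξ) * chi γ κ ρ (ξ - u))

/-- domain D = {f₀ > 0} ∪ {0} -/
def Dset : Set (ℝ × ℝ) := {f | 0 < f.1 ∨ f = 0}

/-- kinetic energy H(f,ξ) -/
def Hk (γ κ : ℝ) (f : ℝ × ℝ) (ξ : ℝ) : ℝ :=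
  if f = 0 then 0 else
    th γ / (1 - th γ) * (ξ ^ 2 / 2) * f.1
      + th γ / (2 * cgk γ κ ^ (1 / lam γ)) * (f.1 ^ (1 + 1 / lam γ) / (1 + 1 / lam γ))
      + 1 / (1 - th γ) * (1 / 2) * (f.2 ^ 2 / f.1)
      - th γ / (1 - th γ) * ξ * f.2

/-- u(f,ξ), inverse relation to f = M(ρ,u,ξ) -/
def uf (γ : ℝ) (f : ℝ × ℝ) (ξ : ℝ) : ℝ := (f.2 / f.1 - th γ * ξ) / (1 - th γ)

/-- ρ(f,ξ), inverse relation to f = M(ρ,u,ξ) -/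
def rf (γ κ : ℝ) (f : ℝ × ℝ) (ξ : ℝ) : ℝ :=
  ag γ κ ^ (-(2 / (γ - 1))) *
    (((f.2 / f.1 - ξ) / (1 - th γ)) ^ 2 + (f.1 / cgk γ κ) ^ (1 / lam γ)) ^ (1 / (γ - 1))

/-- kinetic Riemann invariant ω₁(f,ξ) -/
def om1 (γ κ : ℝ) (f : ℝ × ℝ) (ξ : ℝ) : ℝ :=
  uf γ f ξ - ag γ κ * rf γ κ f ξ ^ th γ

/-- kinetic Riemann invariant ω₂(f,ξ) -/
def om2 (γ κ : ℝ) (f : ℝ × ℝ) (ξ : ℝ) : ℝ :=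
  uf γ f ξ + ag γ κ * rf γ κ f ξ ^ th γ

/-- Υ_{l}(z) = ∫_1^z (y²-1)^l dy -/
def Ups (l z : ℝ) : ℝ := ∫ y in (1:ℝ)..z, (y ^ 2 - 1) ^ l

/-- entropy kernel Φ(ρ,u,ξ,v) -/
def Phi (γ κ ρ u ξ v : ℝ) : ℝ :=
  let w1 := u - ag γ κ * ρ ^ th γ
  let w2 := u + ag γ κ * ρ ^ th γ
  if w1 < ξ ∧ ξ < w2 ∧ w1 < v ∧ v < w2 then
    (1 - th γ) ^ 2 / th γ * (cgk γ κ / Jl (lam γ)) * |ξ - v| ^ (2 * lam γ - 1) *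
      Ups (lam γ - 1) (((ξ + v) * (w1 + w2) - 2 * (w1 * w2 + ξ * v)) / ((w2 - w1) * |ξ - v|))
  else 0

/-- kinetic entropy H_S(f,ξ) -/
def HS (γ κ : ℝ) (S : ℝ → ℝ) (f : ℝ × ℝ) (ξ : ℝ) : ℝ :=
  if f = 0 then 0 else ∫ v : ℝ, Phi γ κ (rf γ κ f ξ) (uf γ f ξ) ξ v * S v

/-- kinetic invariant domain D̃_ξ -/
def Dtil (γ κ ωmin ωmax ξ : ℝ) : Set (ℝ × ℝ) :=
  {f | f ∈ Dset ∧ (f = 0 ∨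
    (ωmin ≤ om1 γ κ f ξ ∧ om1 γ κ f ξ ≤ om2 γ κ f ξ ∧ om2 γ κ f ξ ≤ ωmax))}

/-- T_S(ρ,u) (subdifferential of η_S) -/
def TS (γ κ : ℝ) (S : ℝ → ℝ) (ρ u : ℝ) : ℝ × ℝ :=
  ((1 / Jl (lam γ)) * ∫ z in (-1:ℝ)..1, (1 - z ^ 2) ^ lam γ *
      (S (u + ag γ κ * ρ ^ th γ * z)
        + (th γ * ag γ κ * ρ ^ th γ * z - u) * deriv S (u + ag γ κ * ρ ^ th γ * z)),
   (1 / Jl (lam γ)) * ∫ z in (-1:ℝ)..1, (1 - z ^ 2) ^ lam γ *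
      deriv S (u + ag γ κ * ρ ^ th γ * z))

/-- inner product on ℝ² -/
def dot (a b : ℝ × ℝ) : ℝ := a.1 * b.1 + a.2 * b.2

/-- the map Q from f to the kinetic Riemann invariants -/
def Qm (γ κ ξ : ℝ) (f : ℝ × ℝ) : ℝ × ℝ :=
  ((f.2 / f.1 - th γ * ξ) / (1 - th γ)
      - Real.sqrt (((f.2 / f.1 - ξ) / (1 - th γ)) ^ 2 + (f.1 / cgk γ κ) ^ (1 / lam γ)),
   (f.2 / f.1 - th γ * ξ) / (1 - th γ)
      + Real.sqrt (((f.2 / f.1 - ξ) / (1 - th γ)) ^ 2 + (f.1 / cgk γ κ) ^ (1 / lam γ)))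

/-- the map R from the kinetic Riemann invariants to f -/
def Rm (γ κ ξ : ℝ) (ω : ℝ × ℝ) : ℝ × ℝ :=
  (cgk γ κ * (max (((ω.2 - ω.1) / 2) ^ 2 - (ξ - (ω.1 + ω.2) / 2) ^ 2) 0) ^ lam γ,
   ((1 - th γ) * (ω.1 + ω.2) / 2 + th γ * ξ) *
     (cgk γ κ * (max (((ω.2 - ω.1) / 2) ^ 2 - (ξ - (ω.1 + ω.2) / 2) ^ 2) 0) ^ lam γ))


lemma lam_pos' {γ : ℝ} (hγ : 1 < γ) (hγ' : γ < 3) : 0 < lam γ := by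
  have h1 : 0 < γ - 1 := by linarith
  rw [lam, sub_pos, div_lt_div_iff₀ (by norm_num) h1]
  linarith

lemma Jl_pos' {l : ℝ} (hl : 0 < l) : 0 < Jl l := by
  rw [Jl]
  apply intervalIntegral.intervalIntegral_pos_of_pos_on
  · apply Continuous.intervalIntegrable
    have : ∀ x : ℝ, ContinuousAt (fun z : ℝ => (1 - z ^ 2) ^ l) x := by
      intro x
      exact (Real.continuousAt_rpow_const _ _ (Or.inr hl.le)).comp
        (by continuity : Continuous fun z : ℝ => 1 - z ^ 2).continuousAt
    exact continuous_iff_continuousAt.2 this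
  · intro x hx
    apply Real.rpow_pos_of_pos
    nlinarith [hx.1, hx.2]
  · norm_num

lemma ag_pos' {γ κ : ℝ} (hκ : 0 < κ) (hγ : 1 < γ) : 0 < ag γ κ := by
  rw [ag]
  apply div_pos _ (by linarith)
  have : 0 < γ * κ := mul_pos (by linarith) hκ
  positivity

lemma cgk_pos' {γ κ : ℝ} (hκ : 0 < κ) (hγ : 1 < γ) (hγ' : γ < 3) : 0 < cgk γ κ := by
  rw [cgk]
  exact div_pos (Real.rpow_pos_of_pos (ag_pos' hκ hγ) _) (Jl_pos' (lam_pos' hγ hγ'))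

theorem stmt3 (γ κ ξ : ℝ) (hκ : 0 < κ) (hγ : 1 < γ) (hγ' : γ < 3) :
    (∀ f : ℝ × ℝ, 0 < f.1 →
      (Qm γ κ ξ f).1 < ξ ∧ ξ < (Qm γ κ ξ f).2 ∧ Rm γ κ ξ (Qm γ κ ξ f) = f) ∧
    (∀ ω : ℝ × ℝ, ω.1 < ξ → ξ < ω.2 →
      0 < (Rm γ κ ξ ω).1 ∧ Qm γ κ ξ (Rm γ κ ξ ω) = ω) := by
  have hl : 0 < lam γ := lam_pos' hγ hγ'
  have hc : 0 < cgk γ κ := cgk_pos' hκ hγ hγ'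
  have ht0 : 0 < th γ := by rw [th]; linarith
  have ht1 : th γ < 1 := by rw [th]; linarith
  have h1t : 0 < 1 - th γ := by linarith
  have hln : lam γ ≠ 0 := ne_of_gt hl
  constructor
  · intro f hf
    set t := th γ
    set c := cgk γ κ
    set l := lam γ
    set a := (f.2 / f.1 - t * ξ) / (1 - t) with ha
    set b := (f.2 / f.1 - ξ) / (1 - t) with hb
    set E := (f.1 / c) ^ (1 / l) with hE
    have hEpos : 0 < E := Real.rpow_pos_of_pos (div_pos hf hc) _
    set s := Real.sqrt (b ^ 2 + E) with hs
    have hs2 : s ^ 2 = b ^ 2 + E := Real.sq_sqrt (by positivity)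
    have habs : |b| < s := by
      rw [← Real.sqrt_sq_eq_abs, hs]
      exact Real.sqrt_lt_sqrt (sq_nonneg b) (by linarith)
    have hb1 : -s < b := neg_lt_of_abs_lt habs
    have hb2 : b < s := lt_of_abs_lt habs
    have haux : a - ξ = b := by
      rw [ha, hb]
      field_simp
      ring
    have hQ : Qm γ κ ξ f = (a - s, a + s) := rfl
    refine ⟨by rw [hQ]; simp only; linarith, by rw [hQ]; simp only; linarith, ?_⟩
    rw [hQ, Rm]
    simp only
    have e1 : ((a + s - (a - s)) / 2) ^ 2 - (ξ - (a - s + (a + s)) / 2) ^ 2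
        = s ^ 2 - (a - ξ) ^ 2 := by ring
    have e2 : s ^ 2 - (a - ξ) ^ 2 = E := by rw [haux, hs2]; ring
    rw [e1, e2, max_eq_left hEpos.le]
    have e3 : E ^ l = f.1 / c := by
      rw [hE, ← Real.rpow_mul (div_pos hf hc).le, one_div_mul_cancel hln, Real.rpow_one]
    have hab : (1 - t) * a + t * ξ = f.2 / f.1 := by
      rw [ha]; field_simp; ring
    have hf1 : f.1 ≠ 0 := ne_of_gt hf
    have hcne : c ≠ 0 := ne_of_gt hc
    have comp1 : c * E ^ l = f.1 := by rw [e3]; field_simp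
    have comp2 : ((1 - t) * (a - s + (a + s)) / 2 + t * ξ) * (c * E ^ l) = f.2 := by
      have : (1 - t) * (a - s + (a + s)) / 2 = (1 - t) * a := by ring
      rw [this, comp1, hab]
      field_simp
    exact Prod.ext comp1 comp2
  · intro ω h1 h2
    set t := th γ
    set c := cgk γ κ
    set l := lam γ
    set m := (ω.1 + ω.2) / 2 with hm
    set r := (ω.2 - ω.1) / 2 with hr
    have hrpos : 0 < r := by rw [hr]; linarith
    set D := r ^ 2 - (ξ - m) ^ 2 with hD
    have hDpos : 0 < D := by
      rw [hD]
      have : (ξ - m) ^ 2 < r ^ 2 := sq_lt_sq' (by rw [hm, hr]; linarith) (by rw [hm, hr]; linarith)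
      linarith
    have hRm : Rm γ κ ξ ω = (c * D ^ l, ((1 - t) * (ω.1 + ω.2) / 2 + t * ξ) * (c * D ^ l)) := by
      rw [Rm]
      have h0 : ((ω.2 - ω.1) / 2) ^ 2 - (ξ - (ω.1 + ω.2) / 2) ^ 2 = D := by rw [hD, hm, hr]
      rw [h0, max_eq_left hDpos.le]
    have hf1pos : 0 < c * D ^ l := mul_pos hc (Real.rpow_pos_of_pos hDpos _)
    refine ⟨by rw [hRm]; exact hf1pos, ?_⟩
    rw [hRm, Qm]
    simp only
    have hf1ne : c * D ^ l ≠ 0 := ne_of_gt hf1pos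
    have hdiv : ((1 - t) * (ω.1 + ω.2) / 2 + t * ξ) * (c * D ^ l) / (c * D ^ l)
        = (1 - t) * m + t * ξ := by
      rw [mul_div_assoc, div_self hf1ne, mul_one, hm]; ring
    rw [hdiv]
    have e1 : ((1 - t) * m + t * ξ - t * ξ) / (1 - t) = m := by field_simp; ring
    have e2 : ((1 - t) * m + t * ξ - ξ) / (1 - t) = m - ξ := by field_simp; ring
    have e3 : (c * D ^ l / c) ^ (1 / l) = D := by
      rw [mul_div_cancel_left₀ _ (ne_of_gt hc),
        ← Real.rpow_mul hDpos.le, mul_one_div_cancel hln, Real.rpow_one]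
    rw [e1, e2, e3]
    have e4 : Real.sqrt ((m - ξ) ^ 2 + D) = r := by
      rw [hD]
      have : (m - ξ) ^ 2 + (r ^ 2 - (ξ - m) ^ 2) = r ^ 2 := by ring
      rw [this, Real.sqrt_sq hrpos.le]
    rw [e4]
    have : ω = (ω.1, ω.2) := rfl
    rw [this, Prod.mk.injEq]
    constructor <;> (rw [hm, hr]; ring)
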